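/- arXiv:1811.03586 — 4 statements merged into one kernel-verified Lean document; each statement's English description precedes it below -/
import Mathlib

section
/- The polynomial f(X,Y) = (1 - X²)·Y² + 1 is strictly positive on [-1,1] × ℝ, but f does not belong to the quadratic module generated by (1 - X²)³ in ℝ[X,Y], i.e., f cannot be written as σ₀ + σ₁·(1-X²)³ with σ₀, σ₁ sums of squares in ℝ[X,Y]. -/
open Polynomial

lemma sumsq_exists {A : Type*} [AddCommMonoid A] [Mul A] {σ : A} (h : IsSumSq σ) :
    ∃ s : Multiset A, σ = (s.map (fun a => a * a)).sum := by
  induction h with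
  | zero => exact ⟨0, by simp⟩
  | sq_add a pS ih => obtain ⟨s, rfl⟩ := ih; exact ⟨a ::ₘ s, by simp⟩

lemma eval_msum (s : Multiset (Polynomial ℝ)) (x : ℝ) :
    eval x s.sum = (s.map (eval x)).sum := by
  induction s using Multiset.induction with
  | empty => simp
  | cons a s ih => simp [ih]

lemma coeff_msum {R' : Type*} [Semiring R'] (s : Multiset (Polynomial R')) (n : ℕ) :
    (s.sum).coeff n = (s.map (fun p => p.coeff n)).sum := by
  induction s using Multiset.induction with
  | empty => simp
  | cons a s ih => simp [ih]

lemma evalsq_nonneg (s : Multiset (Polynomial ℝ)) (x : ℝ) :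
    0 ≤ eval x ((s.map (fun a => a * a)).sum) := by
  rw [eval_msum, Multiset.map_map]
  apply Multiset.sum_nonneg
  intro y hy
  obtain ⟨a, _, rfl⟩ := Multiset.mem_map.1 hy
  simpa using mul_self_nonneg (eval x a)

lemma mem_eval_zero {s : Multiset (Polynomial ℝ)} {x : ℝ}
    (h : eval x ((s.map (fun a => a * a)).sum) = 0) {a} (ha : a ∈ s) : eval x a = 0 := by
  rw [eval_msum, Multiset.map_map] at h
  simp only [Function.comp_apply, eval_mul] at h
  have hle := Multiset.single_le_sum (s := s.map (fun b => eval x b * eval x b))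
      (by intro y hy; obtain ⟨b, _, rfl⟩ := Multiset.mem_map.1 hy; exact mul_self_nonneg _)
      _ (Multiset.mem_map_of_mem _ ha)
  have h2 : eval x a * eval x a = 0 := le_antisymm (h ▸ hle) (mul_self_nonneg _)
  exact mul_self_eq_zero.1 h2

lemma poly_zero {p : Polynomial ℝ} (h : ∀ x ∈ Set.Ioo (-1:ℝ) 1, eval x p = 0) : p = 0 :=
  p.eq_zero_of_infinite_isRoot ((Set.Ioo_infinite (by norm_num)).mono h)

lemma coeff_sq {R' : Type*} [CommSemiring R'] (p : Polynomial R') {k : ℕ} (h : p.natDegree ≤ k) :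
    (p * p).coeff (k + k) = p.coeff k * p.coeff k := by
  rw [Polynomial.coeff_mul, Finset.sum_eq_single (k, k)]
  · rintro ⟨i, j⟩ hmem hne
    rw [Finset.HasAntidiagonal.mem_antidiagonal] at hmem
    have hne' : i ≠ k ∨ j ≠ k := by
      by_contra hc
      push_neg at hc
      exact hne (by simp [hc.1, hc.2])
    rcases lt_or_ge k i with hi | hi
    · rw [coeff_eq_zero_of_natDegree_lt (lt_of_le_of_lt h hi), zero_mul]
    · have : k < j := by omega
      rw [coeff_eq_zero_of_natDegree_lt (lt_of_le_of_lt h this), mul_zero]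
  · intro h'
    exact absurd (Finset.HasAntidiagonal.mem_antidiagonal.2 (by simp)) h'

lemma key_coeff (s₀ s₁ : Multiset (Polynomial (Polynomial ℝ)))
    (hf : (C ((1:Polynomial ℝ) - X^2) * X^2 + 1 : Polynomial (Polynomial ℝ)) =
      (s₀.map (fun p => p * p)).sum + (s₁.map (fun p => p * p)).sum * C (((1:Polynomial ℝ) - X^2)^3))
    (k : ℕ) (h0 : ∀ p ∈ s₀, p.natDegree ≤ k) (h1 : ∀ q ∈ s₁, q.natDegree ≤ k) :
    (C ((1:Polynomial ℝ) - X^2) * X^2 + 1 : Polynomial (Polynomial ℝ)).coeff (k + k) =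
      (((s₀.map (fun p => p.coeff k)).map (fun a => a * a)).sum)
      + (((s₁.map (fun p => p.coeff k)).map (fun a => a * a)).sum) * (((1:Polynomial ℝ) - X^2)^3) := by
  rw [hf, coeff_add, coeff_mul_C, coeff_msum, coeff_msum,
    Multiset.map_map, Multiset.map_map, Multiset.map_map, Multiset.map_map]
  congr 1
  · apply congrArg
    apply Multiset.map_congr rfl
    intro p hp
    exact coeff_sq p (h0 p hp)
  · apply congrArg (· * _)
    apply congrArg
    apply Multiset.map_congr rfl
    intro q hq
    exact coeff_sq q (h1 q hq)

lemma coeff_f_high (n : ℕ) (hn : 2 < n) :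
    (C ((1:Polynomial ℝ) - X^2) * X^2 + 1 : Polynomial (Polynomial ℝ)).coeff n = 0 := by
  rw [coeff_add, coeff_C_mul, coeff_X_pow, coeff_one]
  rw [if_neg (by omega), if_neg (by omega)]
  simp

lemma coeff_f_two :
    (C ((1:Polynomial ℝ) - X^2) * X^2 + 1 : Polynomial (Polynomial ℝ)).coeff 2
      = (1:Polynomial ℝ) - X^2 := by
  rw [coeff_add, coeff_C_mul, coeff_X_pow, coeff_one]
  simp

lemma sos_zero_of_ioo {s t : Polynomial ℝ}
    (hs : ∀ x : ℝ, 0 ≤ eval x s) (ht : ∀ x : ℝ, 0 ≤ eval x t)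
    (h : s + t * ((1:Polynomial ℝ) - X^2)^3 = 0) : s = 0 ∧ t = 0 := by
  have hsx : ∀ x ∈ Set.Ioo (-1:ℝ) 1, eval x s = 0 ∧ eval x t = 0 := by
    intro x hx
    have hgx : (0:ℝ) < (1 - x^2)^3 := by
      have h1 : (0:ℝ) < 1 - x^2 := by nlinarith [hx.1, hx.2]
      positivity
    have hev := congrArg (eval x) h
    simp only [eval_add, eval_mul, eval_pow, eval_sub, eval_one, eval_X, eval_zero] at hev
    constructor
    · nlinarith [hs x, ht x, mul_nonneg (ht x) hgx.le]
    · nlinarith [hs x, ht x, mul_nonneg (ht x) hgx.le]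
  have hs0 : s = 0 := poly_zero (fun x hx => (hsx x hx).1)
  have ht0 : t = 0 := poly_zero (fun x hx => (hsx x hx).2)
  exact ⟨hs0, ht0⟩

lemma descent (s₀ s₁ : Multiset (Polynomial (Polynomial ℝ)))
    (hf : (C ((1:Polynomial ℝ) - X^2) * X^2 + 1 : Polynomial (Polynomial ℝ)) =
      (s₀.map (fun p => p * p)).sum + (s₁.map (fun p => p * p)).sum * C (((1:Polynomial ℝ) - X^2)^3)) :
    ∀ k : ℕ, (∀ p ∈ s₀, p.natDegree ≤ k + 1) → (∀ q ∈ s₁, q.natDegree ≤ k + 1) →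
      (∀ p ∈ s₀, p.natDegree ≤ 1) ∧ (∀ q ∈ s₁, q.natDegree ≤ 1) := by
  intro k
  induction k with
  | zero => exact fun h0 h1 => ⟨h0, h1⟩
  | succ k ih =>
    intro h0 h1
    have hc := key_coeff s₀ s₁ hf (k + 2) h0 h1
    rw [coeff_f_high _ (by omega)] at hc
    have hzz := sos_zero_of_ioo (s := ((s₀.map (fun p => p.coeff (k+2))).map (fun a => a * a)).sum)
      (t := ((s₁.map (fun p => p.coeff (k+2))).map (fun a => a * a)).sum)
      (fun x => evalsq_nonneg _ x) (fun x => evalsq_nonneg _ x) hc.symm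
    have hcz : ∀ p ∈ s₀, p.coeff (k+2) = 0 := by
      intro p hp
      apply poly_zero
      intro x _
      exact mem_eval_zero (s := s₀.map (fun p => p.coeff (k+2))) (by rw [hzz.1]; simp) (Multiset.mem_map_of_mem (fun p => p.coeff (k+2)) hp)
    have hcz' : ∀ q ∈ s₁, q.coeff (k+2) = 0 := by
      intro q hq
      apply poly_zero
      intro x _
      exact mem_eval_zero (s := s₁.map (fun p => p.coeff (k+2))) (by rw [hzz.2]; simp) (Multiset.mem_map_of_mem (fun p => p.coeff (k+2)) hq)
    apply ih
    · intro p hp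
      rw [Polynomial.natDegree_le_iff_coeff_eq_zero]
      intro m hm
      rcases eq_or_lt_of_le (Nat.succ_le_of_lt hm) with hm' | hm'
      · rw [← hm']; exact hcz p hp
      · exact coeff_eq_zero_of_natDegree_lt (lt_of_le_of_lt (h0 p hp) hm')
    · intro q hq
      rw [Polynomial.natDegree_le_iff_coeff_eq_zero]
      intro m hm
      rcases eq_or_lt_of_le (Nat.succ_le_of_lt hm) with hm' | hm'
      · rw [← hm']; exact hcz' q hq
      · exact coeff_eq_zero_of_natDegree_lt (lt_of_le_of_lt (h1 q hq) hm')

/-- In `ℝ[X,Y]`, represented as `(ℝ[X])[Y]`, the polynomial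
`f = (1 - X²)·Y² + 1` is strictly positive on `[-1,1] × ℝ`, yet `f` is not of the
form `σ₀ + σ₁·(1 - X²)³` with `σ₀, σ₁` sums of squares in `ℝ[X,Y]`. -/
theorem stmt_4 :
    (∀ x : ℝ, x ∈ Set.Icc (-1 : ℝ) 1 → ∀ y : ℝ,
      0 < Polynomial.eval y
        ((C ((1 : Polynomial ℝ) - X ^ 2) * X ^ 2 + 1).map (Polynomial.evalRingHom x))) ∧
    ¬ ∃ σ₀ σ₁ : Polynomial (Polynomial ℝ), IsSumSq σ₀ ∧ IsSumSq σ₁ ∧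
      C ((1 : Polynomial ℝ) - X ^ 2) * X ^ 2 + 1 =
        σ₀ + σ₁ * C (((1 : Polynomial ℝ) - X ^ 2) ^ 3) := by
  constructor
  · intro x hx y
    simp only [Polynomial.map_add, Polynomial.map_mul, Polynomial.map_pow, Polynomial.map_one,
      map_C, map_X, coe_evalRingHom, eval_add, eval_mul, eval_pow, eval_one, eval_C, eval_X,
      eval_sub]
    have hx2 : x ^ 2 ≤ 1 := by nlinarith [hx.1, hx.2]
    nlinarith [sq_nonneg y, mul_nonneg (sub_nonneg.2 hx2) (sq_nonneg y)]
  · rintro ⟨σ₀, σ₁, h₀, h₁, hf⟩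
    obtain ⟨s₀, rfl⟩ := sumsq_exists h₀
    obtain ⟨s₁, rfl⟩ := sumsq_exists h₁
    -- initial degree bound
    set N : ℕ := (s₀.map natDegree).sum + (s₁.map natDegree).sum with hN
    have hb0 : ∀ p ∈ s₀, p.natDegree ≤ N + 1 := by
      intro p hp
      have := Multiset.single_le_sum (s := s₀.map natDegree) (fun _ _ => Nat.zero_le _)
        _ (Multiset.mem_map_of_mem natDegree hp)
      omega
    have hb1 : ∀ q ∈ s₁, q.natDegree ≤ N + 1 := by
      intro q hq
      have := Multiset.single_le_sum (s := s₁.map natDegree) (fun _ _ => Nat.zero_le _)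
        _ (Multiset.mem_map_of_mem natDegree hq)
      omega
    obtain ⟨hd0, hd1⟩ := descent s₀ s₁ hf N hb0 hb1
    -- coefficient at degree 2
    have hc := key_coeff s₀ s₁ hf 1 hd0 hd1
    rw [coeff_f_two] at hc
    -- Stengle's argument
    set s : Polynomial ℝ := ((s₀.map (fun p => p.coeff 1)).map (fun a => a * a)).sum with hs
    set t : Polynomial ℝ := ((s₁.map (fun p => p.coeff 1)).map (fun a => a * a)).sum with ht
    have hev1 := congrArg (eval 1) hc
    simp only [eval_add, eval_mul, eval_pow, eval_sub, eval_one, eval_X] at hev1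
    norm_num at hev1
    -- hev1 : 0 = eval 1 s  (the t term vanishes since (1-1)^3 = 0)
    have hs1 : eval 1 s = 0 := by
      have := evalsq_nonneg (s₀.map (fun p => p.coeff 1)) 1
      linarith [hev1]
    have hdvd_s : (X - C (1:ℝ)) ^ 2 ∣ s := by
      rw [hs]
      apply Multiset.dvd_sum
      intro y hy
      obtain ⟨a, ha, rfl⟩ := Multiset.mem_map.1 hy
      have hroot : (X - C (1:ℝ)) ∣ a := dvd_iff_isRoot.2 (mem_eval_zero hs1 ha)
      rw [sq]
      exact mul_dvd_mul hroot hroot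
    have hdvd_g : (X - C (1:ℝ)) ^ 2 ∣ ((1:Polynomial ℝ) - X ^ 2) ^ 3 := by
      have h1 : (X - C (1:ℝ)) ∣ ((1:Polynomial ℝ) - X ^ 2) := dvd_iff_isRoot.2 (by simp [IsRoot])
      exact dvd_trans (pow_dvd_pow_of_dvd h1 2) (pow_dvd_pow _ (by norm_num))
    have hdvd : (X - C (1:ℝ)) ^ 2 ∣ ((1:Polynomial ℝ) - X ^ 2) := by
      rw [hc]
      exact dvd_add hdvd_s (hdvd_g.mul_left t)
    obtain ⟨u, hu⟩ := hdvd
    have hder := congrArg (fun p => eval 1 (derivative p)) hu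
    simp only [derivative_sub, derivative_one, derivative_pow, derivative_mul, derivative_X,
      derivative_C, Polynomial.derivative_one, eval_mul, eval_add, eval_sub, eval_pow, eval_one,
      eval_X, eval_C, eval_zero, eval_natCast] at hder
    norm_num at hder
end

section
/- If 1 - X² were expressible as σ₀ + σ₁·(1-X²)³ with σ₀, σ₁ sums of squares in ℝ[X], then evaluating at points near x = 1 yields a contradiction: 1 - X² does not belong to the quadratic module generated by (1-X²)³ in ℝ[X]. -/
open Polynomial

lemma eval_nonneg_of_isSumSq {p : Polynomial ℝ} (h : IsSumSq p) (x : ℝ) :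
    0 ≤ p.eval x := by
  induction h with
  | zero => simp
  | sq_add a pS ih => simp only [eval_add, eval_mul]; nlinarith [mul_self_nonneg (a.eval x)]

/-- Stengle's example: `1 - X²` is not in the quadratic module generated by
`(1 - X²)³` in `ℝ[X]`. -/
theorem stmt_5 :
    ¬ ∃ σ₀ σ₁ : Polynomial ℝ, IsSumSq σ₀ ∧ IsSumSq σ₁ ∧
      1 - X ^ 2 = σ₀ + σ₁ * (1 - X ^ 2) ^ 3 := by
  rintro ⟨σ₀, σ₁, h₀, h₁, heq⟩
  have key : ∀ x : ℝ, 1 < x → 1 ≤ σ₁.eval x * (1 - x ^ 2) ^ 2 := by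
    intro x hx
    have hev := congrArg (Polynomial.eval x) heq
    simp only [eval_add, eval_sub, eval_mul, eval_pow, eval_one, eval_X] at hev
    have h0 := eval_nonneg_of_isSumSq h₀ x
    have hneg : 1 - x ^ 2 < 0 := by nlinarith
    nlinarith [sq_nonneg (1 - x ^ 2), mul_pos (mul_pos (neg_pos.2 hneg) (neg_pos.2 hneg)) (neg_pos.2 hneg)]
  have hc : Continuous fun x : ℝ => σ₁.eval x * (1 - x ^ 2) ^ 2 := σ₁.continuous.mul ((continuous_const.sub ((continuous_id.pow 2))).pow 2)
  have hlim : Filter.Tendsto (fun x : ℝ => σ₁.eval x * (1 - x ^ 2) ^ 2)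
      (nhdsWithin 1 (Set.Ioi 1)) (nhds (σ₁.eval 1 * (1 - (1:ℝ) ^ 2) ^ 2)) :=
    (hc.tendsto 1).mono_left nhdsWithin_le_nhds
  have h1 : (1:ℝ) ≤ σ₁.eval 1 * (1 - (1:ℝ) ^ 2) ^ 2 :=
    ge_of_tendsto hlim (Filter.eventually_of_mem self_mem_nhdsWithin fun x hx => key x hx)
  norm_num at h1
end

section
/- For nonzero polynomials g₁, …, g_s in ℝ[X₁,…,Xₙ], the norm of their product satisfies ‖g₁⋯g_s‖ ≤ (deg g₁ + 1)⋯(deg g_s + 1)·‖g₁‖⋯‖g_s‖, where for f = Σ_{|α|≤d} (|α| choose α)·a_α·X^α one defines ‖f‖ = max |a_α|. -/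
open MvPolynomial
open Finset

lemma hprod {n : ℕ} (k' : Fin n → ℕ) :
    (∏ i : Fin n, (X i : MvPolynomial (Fin n) ℝ) ^ k' i)
      = monomial (Finsupp.equivFunOnFinite.symm k') 1 := by
  rw [← prod_X_pow_eq_monomial]
  have hc : ⇑(Finsupp.equivFunOnFinite.symm k') = k' := rfl
  rw [hc]
  refine (Finset.prod_subset (Finset.subset_univ _) ?_).symm
  intro x _ hx
  rw [Finsupp.mem_support_iff, not_not, hc] at hx
  simp [hx]

lemma coeff_sum_X_pow {n : ℕ} (k : ℕ) (β : Fin n →₀ ℕ) :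
    coeff β ((∑ i : Fin n, (X i : MvPolynomial (Fin n) ℝ)) ^ k)
      = if ∑ i, β i = k then (Nat.multinomial Finset.univ ⇑β : ℝ) else 0 := by
  rw [Finset.sum_pow_eq_sum_piAntidiag, MvPolynomial.coeff_sum]
  have step : ∀ k' ∈ piAntidiag univ k,
      coeff β ((Nat.multinomial univ k' : MvPolynomial (Fin n) ℝ) * ∏ i, X i ^ k' i)
        = if k' = ⇑β then (Nat.multinomial univ k' : ℝ) else 0 := by
    intro k' _
    rw [hprod, ← MvPolynomial.C_eq_coe_nat, coeff_C_mul, coeff_monomial]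
    have he : Finsupp.equivFunOnFinite.symm k' = β ↔ k' = ⇑β := by
      rw [Equiv.symm_apply_eq]; rfl
    by_cases h : k' = ⇑β
    · rw [if_pos (he.mpr h), if_pos h, mul_one]
    · rw [if_neg (fun hh => h (he.mp hh)), if_neg h, mul_zero]
  rw [Finset.sum_congr rfl step, Finset.sum_ite_eq' (piAntidiag univ k) (⇑β)]
  simp only [mem_piAntidiag, mem_univ, implies_true, and_true]

lemma sum_apply_add {n : ℕ} {p q α : Fin n →₀ ℕ} (h : p + q = α) :
    (∑ i, p i) + (∑ i, q i) = ∑ i, α i := by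
  rw [← Finset.sum_add_distrib]; simp [← h]

lemma key_le {n : ℕ} (α : Fin n →₀ ℕ) (k : ℕ) :
    ∑ p ∈ Finset.HasAntidiagonal.antidiagonal α,
        (if ∑ i, p.1 i = k then
          (Nat.multinomial Finset.univ ⇑p.1 : ℝ) * (Nat.multinomial Finset.univ ⇑p.2) else 0)
      ≤ (Nat.multinomial Finset.univ ⇑α : ℝ) := by
  set m := ∑ i, α i with hm
  by_cases hk : k ≤ m
  · have h1 : ((∑ i : Fin n, (X i : MvPolynomial (Fin n) ℝ)) ^ k) *
        ((∑ i : Fin n, (X i : MvPolynomial (Fin n) ℝ)) ^ (m - k))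
        = (∑ i : Fin n, (X i : MvPolynomial (Fin n) ℝ)) ^ m := by
      rw [← pow_add, Nat.add_sub_cancel' hk]
    have h2 := congrArg (coeff α) h1
    rw [MvPolynomial.coeff_mul, coeff_sum_X_pow, if_pos hm.symm] at h2
    rw [← h2]
    apply le_of_eq
    apply Finset.sum_congr rfl
    intro p hp
    rw [Finset.HasAntidiagonal.mem_antidiagonal] at hp
    have hsum := sum_apply_add hp
    rw [coeff_sum_X_pow, coeff_sum_X_pow]
    by_cases h : ∑ i, p.1 i = k
    · rw [if_pos h, if_pos h, if_pos (by omega)]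
    · rw [if_neg h, if_neg h, zero_mul]
  · have : ∀ p ∈ Finset.HasAntidiagonal.antidiagonal α,
        (if ∑ i, p.1 i = k then
          (Nat.multinomial Finset.univ ⇑p.1 : ℝ) * (Nat.multinomial Finset.univ ⇑p.2) else 0) = 0 := by
      intro p hp
      rw [Finset.HasAntidiagonal.mem_antidiagonal] at hp
      have hsum := sum_apply_add hp
      rw [if_neg (by omega)]
    rw [Finset.sum_congr rfl this, Finset.sum_const, smul_zero]
    positivity
open MvPolynomial
open Finset

/-- The multinomial-scaled sup norm: writing `f = ∑ binom(|α|,α) a_α X^α`,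
`mnorm f = max_α |a_α|`, where `a_α = coeff α f / binom(|α|,α)`. -/
noncomputable def mnorm {n : ℕ} (f : MvPolynomial (Fin n) ℝ) : ℝ :=
  ⨆ α : Fin n →₀ ℕ, |coeff α f| / (Nat.multinomial Finset.univ α : ℝ)

lemma mult_pos {n : ℕ} (α : Fin n →₀ ℕ) : (0:ℝ) < (Nat.multinomial Finset.univ ⇑α : ℝ) := by
  exact_mod_cast Nat.multinomial_pos _ _

lemma mnorm_bdd {n : ℕ} (f : MvPolynomial (Fin n) ℝ) :
    BddAbove (Set.range fun α : Fin n →₀ ℕ => |coeff α f| / (Nat.multinomial Finset.univ α : ℝ)) := by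
  refine ⟨∑ β ∈ f.support, |coeff β f|, ?_⟩
  rintro x ⟨α, rfl⟩
  have h1 : |coeff α f| / (Nat.multinomial Finset.univ ⇑α : ℝ) ≤ |coeff α f| := by
    apply div_le_self (abs_nonneg _)
    exact_mod_cast Nat.succ_le_of_lt (Nat.multinomial_pos _ _)
  refine h1.trans ?_
  by_cases h : α ∈ f.support
  · exact Finset.single_le_sum (f := fun β => |coeff β f|) (fun β _ => abs_nonneg _) h
  · rw [MvPolynomial.mem_support_iff, not_not] at h
    rw [h, abs_zero]
    exact Finset.sum_nonneg fun β _ => abs_nonneg _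

lemma mnorm_nonneg {n : ℕ} (f : MvPolynomial (Fin n) ℝ) : 0 ≤ mnorm f :=
  Real.iSup_nonneg fun α => div_nonneg (abs_nonneg _) (mult_pos α).le

lemma abs_coeff_le {n : ℕ} (f : MvPolynomial (Fin n) ℝ) (α : Fin n →₀ ℕ) :
    |coeff α f| ≤ mnorm f * (Nat.multinomial Finset.univ ⇑α : ℝ) := by
  have := le_ciSup (mnorm_bdd f) α
  rw [div_le_iff₀ (mult_pos α)] at this
  exact this

lemma sum_support_eq {n : ℕ} (β : Fin n →₀ ℕ) : ∑ i ∈ β.support, β i = ∑ i, β i :=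
  Finset.sum_subset (Finset.subset_univ _) (by intro x _ hx; simpa using hx)

lemma mnorm_mul {n : ℕ} (f g : MvPolynomial (Fin n) ℝ) :
    mnorm (f * g) ≤ ((f.totalDegree : ℝ) + 1) * mnorm f * mnorm g := by
  set d := f.totalDegree with hd
  have hrhs : (0:ℝ) ≤ ((d : ℝ) + 1) * mnorm f * mnorm g := by
    have := mnorm_nonneg f; have := mnorm_nonneg g; positivity
  refine Real.iSup_le (fun α => ?_) hrhs
  rw [div_le_iff₀ (mult_pos α)]
  have hterm : ∀ p ∈ Finset.HasAntidiagonal.antidiagonal α, |coeff p.1 f * coeff p.2 g|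
      ≤ mnorm f * mnorm g * (if ∑ i, p.1 i ≤ d then
          (Nat.multinomial Finset.univ ⇑p.1 : ℝ) * (Nat.multinomial Finset.univ ⇑p.2) else 0) := by
    intro p _
    by_cases h : ∑ i, p.1 i ≤ d
    · rw [if_pos h, abs_mul]
      calc |coeff p.1 f| * |coeff p.2 g|
          ≤ (mnorm f * (Nat.multinomial Finset.univ ⇑p.1 : ℝ)) *
            (mnorm g * (Nat.multinomial Finset.univ ⇑p.2 : ℝ)) :=
            mul_le_mul (abs_coeff_le f p.1) (abs_coeff_le g p.2) (abs_nonneg _)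
              (mul_nonneg (mnorm_nonneg f) (mult_pos p.1).le)
        _ = mnorm f * mnorm g * ((Nat.multinomial Finset.univ ⇑p.1 : ℝ) *
              (Nat.multinomial Finset.univ ⇑p.2)) := by ring
    · rw [if_neg h, mul_zero]
      have hz : coeff p.1 f = 0 := by
        apply coeff_eq_zero_of_totalDegree_lt
        rw [sum_support_eq]; omega
      rw [hz, zero_mul, abs_zero]
  have hsum : ∑ p ∈ Finset.HasAntidiagonal.antidiagonal α, (if ∑ i, p.1 i ≤ d then
        (Nat.multinomial Finset.univ ⇑p.1 : ℝ) * (Nat.multinomial Finset.univ ⇑p.2) else 0)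
      ≤ ((d : ℝ) + 1) * (Nat.multinomial Finset.univ ⇑α : ℝ) := by
    have hre : ∀ p ∈ Finset.HasAntidiagonal.antidiagonal α, (if ∑ i, p.1 i ≤ d then
        (Nat.multinomial Finset.univ ⇑p.1 : ℝ) * (Nat.multinomial Finset.univ ⇑p.2) else 0)
        = ∑ k ∈ Finset.range (d+1), (if ∑ i, p.1 i = k then
        (Nat.multinomial Finset.univ ⇑p.1 : ℝ) * (Nat.multinomial Finset.univ ⇑p.2) else 0) := by
      intro p _
      simp only [Finset.sum_ite_eq, Finset.mem_range, Nat.lt_succ_iff]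
    rw [Finset.sum_congr rfl hre, Finset.sum_comm]
    calc ∑ k ∈ Finset.range (d+1), ∑ p ∈ Finset.HasAntidiagonal.antidiagonal α, (if ∑ i, p.1 i = k then
            (Nat.multinomial Finset.univ ⇑p.1 : ℝ) * (Nat.multinomial Finset.univ ⇑p.2) else 0)
        ≤ ∑ _k ∈ Finset.range (d+1), (Nat.multinomial Finset.univ ⇑α : ℝ) :=
          Finset.sum_le_sum fun k _ => key_le α k
      _ = ((d : ℝ) + 1) * (Nat.multinomial Finset.univ ⇑α : ℝ) := by
          rw [Finset.sum_const, Finset.card_range]; push_cast; ring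
  calc |coeff α (f * g)| ≤ ∑ p ∈ Finset.HasAntidiagonal.antidiagonal α, |coeff p.1 f * coeff p.2 g| := by
        rw [MvPolynomial.coeff_mul]; exact Finset.abs_sum_le_sum_abs _ _
    _ ≤ ∑ p ∈ Finset.HasAntidiagonal.antidiagonal α, mnorm f * mnorm g * (if ∑ i, p.1 i ≤ d then
          (Nat.multinomial Finset.univ ⇑p.1 : ℝ) * (Nat.multinomial Finset.univ ⇑p.2) else 0) :=
        Finset.sum_le_sum hterm
    _ = mnorm f * mnorm g * ∑ p ∈ Finset.HasAntidiagonal.antidiagonal α, (if ∑ i, p.1 i ≤ d then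
          (Nat.multinomial Finset.univ ⇑p.1 : ℝ) * (Nat.multinomial Finset.univ ⇑p.2) else 0) := by
        rw [Finset.mul_sum]
    _ ≤ mnorm f * mnorm g * (((d : ℝ) + 1) * (Nat.multinomial Finset.univ ⇑α : ℝ)) :=
        mul_le_mul_of_nonneg_left hsum (mul_nonneg (mnorm_nonneg f) (mnorm_nonneg g))
    _ = ((d : ℝ) + 1) * mnorm f * mnorm g * (Nat.multinomial Finset.univ ⇑α : ℝ) := by ring

lemma mnorm_one_le {n : ℕ} : mnorm (1 : MvPolynomial (Fin n) ℝ) ≤ 1 := by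
  refine Real.iSup_le (fun α => ?_) zero_le_one
  rw [div_le_one (mult_pos α)]
  have h1 : |coeff α (1 : MvPolynomial (Fin n) ℝ)| ≤ 1 := by
    rw [MvPolynomial.coeff_one]
    split <;> simp
  have h2 : (1:ℝ) ≤ (Nat.multinomial Finset.univ ⇑α : ℝ) := by
    exact_mod_cast Nat.succ_le_of_lt (Nat.multinomial_pos _ _)
  linarith

lemma main_ind {n : ℕ} : ∀ s (g : Fin s → MvPolynomial (Fin n) ℝ),
    mnorm (∏ i, g i) ≤ ∏ i, (((g i).totalDegree + 1 : ℝ) * mnorm (g i)) := by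
  intro s
  induction s with
  | zero => intro g; simpa using mnorm_one_le
  | succ s ih =>
    intro g
    rw [Fin.prod_univ_succ, Fin.prod_univ_succ]
    have h0 : (0:ℝ) ≤ ((g 0).totalDegree + 1 : ℝ) * mnorm (g 0) := by
      have := mnorm_nonneg (g 0); positivity
    calc mnorm (g 0 * ∏ i : Fin s, g i.succ)
        ≤ (((g 0).totalDegree : ℝ) + 1) * mnorm (g 0) * mnorm (∏ i : Fin s, g i.succ) :=
          mnorm_mul _ _
      _ ≤ (((g 0).totalDegree : ℝ) + 1) * mnorm (g 0) *
            ∏ i : Fin s, (((g i.succ).totalDegree + 1 : ℝ) * mnorm (g i.succ)) := by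
          apply mul_le_mul_of_nonneg_left (ih _)
          push_cast at h0 ⊢; linarith
      _ = (((g 0).totalDegree + 1 : ℝ) * mnorm (g 0)) *
            ∏ i : Fin s, (((g i.succ).totalDegree + 1 : ℝ) * mnorm (g i.succ)) := by
          push_cast; ring

theorem stmt_6 {n s : ℕ} (g : Fin s → MvPolynomial (Fin n) ℝ)
    (hg : ∀ i, g i ≠ 0) :
    mnorm (∏ i, g i) ≤ ∏ i, (((g i).totalDegree + 1 : ℝ) * mnorm (g i)) :=
  main_ind s g
end

section
/- Let S ⊆ ℝⁿ be nonempty and compact, and f ∈ ℝ[X₁,…,Xₙ,Y] with deg_Y f = m, fully m-ic on S, and f > 0 on S × ℝ. Let f̄(X,Y,Z) = Σᵢ fᵢ(X)YⁱZ^{m−i} be the homogenization of f in Y. Then f̄ > 0 on the compact set S × C, where C = {(y,z) ∈ ℝ² : y² + z² = 1}. -/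
open MvPolynomial

/-- Evaluation of the `Y`-homogenization (in degree `m`) of `f` at `(x, y, z)`. -/
noncomputable def evalBar {n : ℕ} (f : Polynomial (MvPolynomial (Fin n) ℝ)) (m : ℕ)
    (x : Fin n → ℝ) (y z : ℝ) : ℝ :=
  ∑ i ∈ Finset.range (m + 1), eval x (f.coeff i) * y ^ i * z ^ (m - i)

lemma aux_pos_lead (p : Polynomial ℝ) (hp : ∀ y, 0 < p.eval y) : 0 < p.leadingCoeff := by
  rcases Nat.eq_zero_or_pos p.natDegree with h | h
  · rw [Polynomial.leadingCoeff, h, Polynomial.coeff_zero_eq_eval_zero]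
    exact hp 0
  · by_contra hle
    push_neg at hle
    have hdeg : 0 < p.degree := Polynomial.natDegree_pos_iff_degree_pos.mp h
    have := (p.tendsto_atBot_of_leadingCoeff_nonpos hdeg hle).eventually
      (Filter.eventually_lt_atBot (0 : ℝ))
    rcases this.exists with ⟨y, hy⟩
    exact absurd (hp y) (not_lt.mpr hy.le)

lemma aux_even (p : Polynomial ℝ) (hp : ∀ y, 0 < p.eval y) : Even p.natDegree := by
  rcases Nat.even_or_odd p.natDegree with h | h
  · exact h
  · exfalso
    set q : Polynomial ℝ := p.comp (-Polynomial.X) with hq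
    have hqn : (-Polynomial.X : Polynomial ℝ).natDegree = 1 := by
      simp [Polynomial.natDegree_neg]
    have hql : (-Polynomial.X : Polynomial ℝ).leadingCoeff = -1 := by
      simp [Polynomial.leadingCoeff, hqn]
    have hqpos : ∀ y, 0 < q.eval y := by
      intro y
      rw [hq, Polynomial.eval_comp]
      simpa using hp (-y)
    have h1 := aux_pos_lead p hp
    have h2 := aux_pos_lead q hqpos
    rw [hq, Polynomial.leadingCoeff_comp (by rw [hqn]; norm_num), hql,
      h.neg_one_pow, mul_neg_one, neg_pos] at h2
    exact absurd h1 (not_lt.mpr h2.le)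

/-- If `S ⊆ ℝⁿ` is nonempty compact, `f ∈ ℝ[X̄,Y]` has `Y`-degree `m`, is fully `m`-ic
on `S` and positive on `S × ℝ`, then its `Y`-homogenization `f̄` is positive on `S × C`,
where `C` is the unit circle. -/
theorem stmt_17 {n : ℕ} (S : Set (EuclideanSpace ℝ (Fin n)))
    (hSne : S.Nonempty) (hScomp : IsCompact S)
    (f : Polynomial (MvPolynomial (Fin n) ℝ)) (m : ℕ) (hm : f.natDegree = m)
    (hfull : ∀ x ∈ S, eval (⇑x) (f.coeff m) ≠ 0)
    (hpos : ∀ x ∈ S, ∀ y : ℝ,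
      0 < Polynomial.eval y (f.map (eval (⇑x)))) :
    ∀ x ∈ S, ∀ y z : ℝ, y ^ 2 + z ^ 2 = 1 → 0 < evalBar f m (⇑x) y z := by
  intro x hx y z hyz
  set p : Polynomial ℝ := f.map (eval ⇑x) with hpdef
  have hc : ∀ i, p.coeff i = eval (⇑x) (f.coeff i) := fun i => Polynomial.coeff_map _ i
  have hpd : p.natDegree = m := by
    refine le_antisymm (hm ▸ Polynomial.natDegree_map_le) ?_
    exact Polynomial.le_natDegree_of_ne_zero (by rw [hc]; exact hfull x hx)
  have hlead : 0 < eval (⇑x) (f.coeff m) := by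
    have := aux_pos_lead p (hpos x hx)
    rwa [Polynomial.leadingCoeff, hpd, hc] at this
  have heven : Even m := hpd ▸ aux_even p (hpos x hx)
  by_cases hz : z = 0
  · subst hz
    have hy2 : y ^ 2 = 1 := by linarith
    have : evalBar f m (⇑x) y 0 = eval (⇑x) (f.coeff m) * y ^ m := by
      rw [evalBar, Finset.sum_eq_single_of_mem m (Finset.self_mem_range_succ m)]
      · simp
      · intro i hi hne
        have : 0 < m - i := Nat.sub_pos_of_lt
          (lt_of_le_of_ne (Nat.lt_succ_iff.mp (Finset.mem_range.mp hi)) hne)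
        rw [zero_pow this.ne', mul_zero]
    rw [this]
    obtain ⟨k, hk⟩ := heven
    have : y ^ m = 1 := by
      rw [hk, ← two_mul, pow_mul, hy2, one_pow]
    rw [this, mul_one]
    exact hlead
  · have hzm : 0 < z ^ m := heven.pow_pos hz
    have key : evalBar f m (⇑x) y z = z ^ m * p.eval (y / z) := by
      rw [Polynomial.eval_eq_sum_range' (lt_of_le_of_lt hpd.le (Nat.lt_succ_self m)),
        Finset.mul_sum, evalBar]
      refine Finset.sum_congr rfl fun i hi => ?_
      have him : i ≤ m := Nat.lt_succ_iff.mp (Finset.mem_range.mp hi)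
      rw [hc, div_pow, pow_sub₀ z hz him]
      field_simp
    rw [key]
    exact mul_pos hzm (hpos x hx (y / z))
end
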